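/- For the logarithmic rate function, define for a fixed slot n the map T(w) = min{w^e(w), w^b(w)} where w^e(w) = min over u of (e_n + Σ_{l=n+1}^{n+u} H_l + Σ_{l=n}^{n+u} min{1/γ_l, w}) / (u+1) and log₂(w^b(w)) = min over v of (b_n + Σ_{l=n+1}^{n+v} B_l + (1/2)Σ_{l=n}^{n+v} log₂(min{1/γ_l, w})) / ((v+1)/2). Then T is monotone non-decreasing, and the fixed-point iteration w^{(k+1)} = T(w^{(k)}) started from any w^{(1)} ≥ w* (where w* is the unique fixed point of T with w* > 0) produces a non-increasing sequence converging to w*. -/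

import Mathlib

/-- For the logarithmic rate function, the map
`T(w) = min{w^e(w), w^b(w)}` built from the energy and data causality bounds with
correction terms `min{1/γ_l, w}` and `log₂(min{1/γ_l, w})` is monotone non-decreasing
on `(0,∞)`, and the fixed-point iteration started from any `w⁽¹⁾ ≥ w*` (where `w*` is
the unique positive fixed point of `T`) is non-increasing and converges to `w*`. -/
theorem stmt6 (N n : ℕ) (hn : n ≤ N) (e b : ℝ) (he : 0 < e) (hb : 0 < b)
    (H B γch : ℕ → ℝ) (hH : ∀ l, 0 ≤ H l) (hB : ∀ l, 0 ≤ B l) (hγ : ∀ l, 0 < γch l)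
    (we wb T : ℝ → ℝ)
    (hwe : ∀ w : ℝ, we w =
      (Finset.range (N - n + 1)).inf'
        (Finset.nonempty_range_iff.mpr (Nat.succ_ne_zero _))
        (fun u => (e + (∑ l ∈ Finset.Icc (n+1) (n+u), H l)
          + ∑ l ∈ Finset.Icc n (n+u), min (1/γch l) w) / (u+1)))
    (hwbpos : ∀ w : ℝ, 0 < w → 0 < wb w)
    (hwb : ∀ w : ℝ, 0 < w → Real.logb 2 (wb w) =
      (Finset.range (N - n + 1)).inf'
        (Finset.nonempty_range_iff.mpr (Nat.succ_ne_zero _))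
        (fun v => (b + (∑ l ∈ Finset.Icc (n+1) (n+v), B l)
          + (1/2) * ∑ l ∈ Finset.Icc n (n+v), Real.logb 2 (min (1/γch l) w))
          / ((v+1)/2)))
    (hT : ∀ w : ℝ, T w = min (we w) (wb w))
    (wstar : ℝ) (hwstar : 0 < wstar) (hfix : T wstar = wstar)
    (huniq : ∀ w : ℝ, 0 < w → T w = w → w = wstar)
    (wseq : ℕ → ℝ) (hstart : wstar ≤ wseq 0)
    (hiter : ∀ k, wseq (k+1) = T (wseq k)) :
    MonotoneOn T (Set.Ioi (0:ℝ)) ∧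
    (∀ k, wseq (k+1) ≤ wseq k) ∧
    Filter.Tendsto wseq Filter.atTop (nhds wstar) := by
  have hne : (Finset.range (N - n + 1)).Nonempty :=
    Finset.nonempty_range_iff.mpr (Nat.succ_ne_zero _)
  have hminpos : ∀ l (w : ℝ), 0 < w → 0 < min (1/γch l) w := by
    intro l w hw
    exact lt_min (one_div_pos.mpr (hγ l)) hw
  have hcard : ∀ u : ℕ, ((Finset.Icc n (n+u)).card : ℝ) = u + 1 := by
    intro u
    have h : n + u + 1 - n = u + 1 := by omega
    rw [Nat.card_Icc, h]
    push_cast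
    ring
  -- monotonicity of we
  have hwe_mono : ∀ x y : ℝ, x ≤ y → we x ≤ we y := by
    intro x y hxy
    rw [hwe x, hwe y]
    apply Finset.le_inf'
    intro u hu
    refine le_trans (Finset.inf'_le _ hu) ?_
    have hu1 : (0:ℝ) < (u:ℝ) + 1 := by positivity
    refine (div_le_div_iff_of_pos_right hu1).mpr ?_
    have : ∑ l ∈ Finset.Icc n (n+u), min (1/γch l) x
        ≤ ∑ l ∈ Finset.Icc n (n+u), min (1/γch l) y :=
      Finset.sum_le_sum fun l _ => min_le_min le_rfl hxy
    linarith
  -- Lipschitz-type bound for we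
  have hwe_lip : ∀ x y : ℝ, x ≤ y → we y ≤ we x + (y - x) := by
    intro x y hxy
    rw [hwe x, hwe y]
    obtain ⟨u, hu, hux⟩ := Finset.exists_mem_eq_inf' hne
      (fun u => (e + (∑ l ∈ Finset.Icc (n+1) (n+u), H l)
          + ∑ l ∈ Finset.Icc n (n+u), min (1/γch l) x) / (u+1))
    rw [hux]
    refine le_trans (Finset.inf'_le _ hu) ?_
    have hu2 : (0:ℝ) < (u:ℝ) + 1 := by positivity
    have hsum : ∑ l ∈ Finset.Icc n (n+u), min (1/γch l) y
        ≤ (∑ l ∈ Finset.Icc n (n+u), min (1/γch l) x) + ((u:ℝ)+1) * (y - x) := by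
      calc ∑ l ∈ Finset.Icc n (n+u), min (1/γch l) y
          ≤ ∑ l ∈ Finset.Icc n (n+u), (min (1/γch l) x + (y - x)) := by
            apply Finset.sum_le_sum
            intro l _
            rcases le_total (1/γch l) x with h | h
            · rw [min_eq_left h]
              exact le_trans (min_le_left _ _) (by linarith)
            · rw [min_eq_right h]
              exact le_trans (min_le_right _ _) (by linarith)
        _ = (∑ l ∈ Finset.Icc n (n+u), min (1/γch l) x) + ((u:ℝ)+1) * (y - x) := by
            rw [Finset.sum_add_distrib, Finset.sum_const, nsmul_eq_mul, hcard]
    calc (e + (∑ l ∈ Finset.Icc (n+1) (n+u), H l)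
          + ∑ l ∈ Finset.Icc n (n+u), min (1/γch l) y) / ((u:ℝ)+1)
        ≤ ((e + (∑ l ∈ Finset.Icc (n+1) (n+u), H l)
          + ∑ l ∈ Finset.Icc n (n+u), min (1/γch l) x) + ((u:ℝ)+1) * (y - x)) / ((u:ℝ)+1) :=
          (div_le_div_iff_of_pos_right hu2).mpr (by linarith)
      _ = (e + (∑ l ∈ Finset.Icc (n+1) (n+u), H l)
          + ∑ l ∈ Finset.Icc n (n+u), min (1/γch l) x) / ((u:ℝ)+1) + (y - x) := by
          field_simp
  -- monotonicity of wb
  have hwb_mono : ∀ x y : ℝ, 0 < x → x ≤ y → wb x ≤ wb y := by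
    intro x y hx hxy
    have hy : 0 < y := hx.trans_le hxy
    have hlog : Real.logb 2 (wb x) ≤ Real.logb 2 (wb y) := by
      rw [hwb x hx, hwb y hy]
      apply Finset.le_inf'
      intro v hv
      refine le_trans (Finset.inf'_le _ hv) ?_
      have hv1 : (0:ℝ) < ((v:ℝ)+1)/2 := by positivity
      refine (div_le_div_iff_of_pos_right hv1).mpr ?_
      have hsum : ∑ l ∈ Finset.Icc n (n+v), Real.logb 2 (min (1/γch l) x)
          ≤ ∑ l ∈ Finset.Icc n (n+v), Real.logb 2 (min (1/γch l) y) :=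
        Finset.sum_le_sum fun l _ =>
          Real.logb_le_logb_of_le one_lt_two (hminpos l x hx) (min_le_min le_rfl hxy)
      linarith
    exact (Real.logb_le_logb one_lt_two (hwbpos x hx) (hwbpos y hy)).mp hlog
  -- ratio bound for wb
  have hwb_ratio : ∀ x y : ℝ, 0 < x → x ≤ y → wb y ≤ wb x * y / x := by
    intro x y hx hxy
    have hy : 0 < y := hx.trans_le hxy
    have hterm : ∀ l : ℕ, Real.logb 2 (min (1/γch l) y)
        ≤ Real.logb 2 (min (1/γch l) x) + (Real.logb 2 y - Real.logb 2 x) := by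
      intro l
      have hkey : min (1/γch l) y * x ≤ min (1/γch l) x * y := by
        rcases le_total (1/γch l) x with h | h
        · rw [min_eq_left h]
          have h1 : min (1/γch l) y ≤ 1/γch l := min_le_left _ _
          nlinarith [mul_nonneg (sub_nonneg.mpr h1) hx.le,
            mul_nonneg (one_div_pos.mpr (hγ l)).le (sub_nonneg.mpr hxy)]
        · rw [min_eq_right h]
          have h1 : min (1/γch l) y ≤ y := min_le_right _ _
          nlinarith [mul_nonneg (sub_nonneg.mpr h1) hx.le]
      have h1 : Real.logb 2 (min (1/γch l) y * x) ≤ Real.logb 2 (min (1/γch l) x * y) :=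
        Real.logb_le_logb_of_le one_lt_two (mul_pos (hminpos l y hy) hx) hkey
      rw [Real.logb_mul (hminpos l y hy).ne' hx.ne',
        Real.logb_mul (hminpos l x hx).ne' hy.ne'] at h1
      linarith
    have hlog : Real.logb 2 (wb y)
        ≤ Real.logb 2 (wb x) + (Real.logb 2 y - Real.logb 2 x) := by
      rw [hwb x hx, hwb y hy]
      obtain ⟨v, hv, hvx⟩ := Finset.exists_mem_eq_inf' hne
        (fun v => (b + (∑ l ∈ Finset.Icc (n+1) (n+v), B l)
          + (1/2) * ∑ l ∈ Finset.Icc n (n+v), Real.logb 2 (min (1/γch l) x)) / ((v+1)/2))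
      rw [hvx]
      refine le_trans (Finset.inf'_le _ hv) ?_
      have hv2 : (0:ℝ) < ((v:ℝ)+1)/2 := by positivity
      have hv1 : ((v:ℝ) + 1) ≠ 0 := by positivity
      have hsum : ∑ l ∈ Finset.Icc n (n+v), Real.logb 2 (min (1/γch l) y)
          ≤ (∑ l ∈ Finset.Icc n (n+v), Real.logb 2 (min (1/γch l) x))
            + ((v:ℝ)+1) * (Real.logb 2 y - Real.logb 2 x) := by
        calc ∑ l ∈ Finset.Icc n (n+v), Real.logb 2 (min (1/γch l) y)
            ≤ ∑ l ∈ Finset.Icc n (n+v),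
                (Real.logb 2 (min (1/γch l) x) + (Real.logb 2 y - Real.logb 2 x)) :=
              Finset.sum_le_sum (fun l _ => hterm l)
          _ = _ := by rw [Finset.sum_add_distrib, Finset.sum_const, nsmul_eq_mul, hcard]
      calc (b + (∑ l ∈ Finset.Icc (n+1) (n+v), B l)
            + (1/2) * ∑ l ∈ Finset.Icc n (n+v), Real.logb 2 (min (1/γch l) y)) / (((v:ℝ)+1)/2)
          ≤ (b + (∑ l ∈ Finset.Icc (n+1) (n+v), B l)
            + (1/2) * ((∑ l ∈ Finset.Icc n (n+v), Real.logb 2 (min (1/γch l) x))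
              + ((v:ℝ)+1) * (Real.logb 2 y - Real.logb 2 x))) / (((v:ℝ)+1)/2) :=
            (div_le_div_iff_of_pos_right hv2).mpr (by linarith)
        _ = (b + (∑ l ∈ Finset.Icc (n+1) (n+v), B l)
            + (1/2) * ∑ l ∈ Finset.Icc n (n+v), Real.logb 2 (min (1/γch l) x)) / (((v:ℝ)+1)/2)
            + (Real.logb 2 y - Real.logb 2 x) := by field_simp; ring
    have hwx := hwbpos x hx
    have hrhs : 0 < wb x * y / x := by positivity
    refine (Real.logb_le_logb one_lt_two (hwbpos y hy) hrhs).mp ?_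
    rw [Real.logb_div (mul_pos hwx hy).ne' hx.ne', Real.logb_mul hwx.ne' hy.ne']
    linarith
  -- monotonicity of T
  have hT_mono : MonotoneOn T (Set.Ioi (0:ℝ)) := by
    intro x hx y hy hxy
    rw [hT x, hT y]
    exact min_le_min (hwe_mono x y hxy) (hwb_mono x y hx hxy)
  -- T w ≤ w for w ≥ wstar
  have hTle : ∀ w : ℝ, wstar ≤ w → T w ≤ w := by
    intro w hw
    have hfix' : min (we wstar) (wb wstar) = wstar := by rw [← hT wstar]; exact hfix
    rcases min_choice (we wstar) (wb wstar) with h | h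
    · have hwe_eq : we wstar = wstar := h.symm.trans hfix'
      rw [hT]
      refine le_trans (min_le_left _ _) ?_
      have := hwe_lip wstar w hw
      rw [hwe_eq] at this
      linarith
    · have hwb_eq : wb wstar = wstar := h.symm.trans hfix'
      rw [hT]
      refine le_trans (min_le_right _ _) ?_
      have := hwb_ratio wstar w hwstar hw
      rw [hwb_eq] at this
      calc wb w ≤ wstar * w / wstar := this
        _ = w := by field_simp
  -- the sequence stays above wstar
  have hlow : ∀ k, wstar ≤ wseq k := by
    intro k
    induction k with
    | zero => exact hstart
    | succ k ih =>
      rw [hiter k]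
      calc wstar = T wstar := hfix.symm
        _ ≤ T (wseq k) := hT_mono (Set.mem_Ioi.mpr hwstar)
            (Set.mem_Ioi.mpr (lt_of_lt_of_le hwstar ih)) ih
  -- the sequence is non-increasing
  have hdec : ∀ k, wseq (k+1) ≤ wseq k := by
    intro k
    rw [hiter k]
    exact hTle (wseq k) (hlow k)
  -- convergence
  have hanti : Antitone wseq := antitone_nat_of_succ_le hdec
  have hbdd : BddBelow (Set.range wseq) := ⟨wstar, by rintro _ ⟨k, rfl⟩; exact hlow k⟩
  set L : ℝ := ⨅ k, wseq k with hL
  have htend : Filter.Tendsto wseq Filter.atTop (nhds L) := tendsto_atTop_ciInf hanti hbdd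
  have hLlow : wstar ≤ L := le_ciInf hlow
  have hLpos : 0 < L := lt_of_lt_of_le hwstar hLlow
  have hLle : ∀ k, L ≤ wseq k := fun k => ciInf_le hbdd k
  have htend1 : Filter.Tendsto (fun k => wseq (k+1)) Filter.atTop (nhds L) :=
    htend.comp (Filter.tendsto_add_atTop_nat 1)
  -- T L ≤ L
  have hTLle : T L ≤ L := by
    apply ge_of_tendsto' htend1
    intro k
    rw [hiter k]
    exact hT_mono (Set.mem_Ioi.mpr hLpos)
      (Set.mem_Ioi.mpr (lt_of_lt_of_le hwstar (hlow k))) (hLle k)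
  -- L ≤ T L
  have hLleTL : L ≤ T L := by
    have hub : ∀ k, wseq (k+1) ≤ min (we L + (wseq k - L)) (wb L * wseq k / L) := by
      intro k
      rw [hiter k, hT]
      exact min_le_min (hwe_lip L (wseq k) (hLle k)) (hwb_ratio L (wseq k) hLpos (hLle k))
    have htend2 : Filter.Tendsto (fun k => min (we L + (wseq k - L)) (wb L * wseq k / L))
        Filter.atTop (nhds (T L)) := by
      have h1 : Filter.Tendsto (fun k => we L + (wseq k - L)) Filter.atTop
          (nhds (we L + (L - L))) :=
        Filter.Tendsto.add tendsto_const_nhds (htend.sub tendsto_const_nhds)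
      have h2 : Filter.Tendsto (fun k => wb L * wseq k / L) Filter.atTop
          (nhds (wb L * L / L)) :=
        (Filter.Tendsto.const_mul (wb L) htend).div_const L
      have h3 := h1.min h2
      have he1 : we L + (L - L) = we L := by ring
      have he2 : wb L * L / L = wb L := by field_simp
      rw [he1, he2, ← hT L] at h3
      exact h3
    exact le_of_tendsto_of_tendsto' htend1 htend2 hub
  have hLfix : T L = L := le_antisymm hTLle hLleTL
  have hLeq : L = wstar := huniq L hLpos hLfix
  rw [hLeq] at htend
  exact ⟨hT_mono, hdec, htend⟩
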